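/- Fix ε > 0. On the Hilbert space X = L²(-1,1) × W^{1,2}_0(-1,1) × W^{1,2}_0(-1,1) with norm ‖(S,T,U)‖² = ∫_{-1}^1 [S² + T'² + U'²(1+ε−x²)] dx, the functional I_ε (defined as in the paper) satisfies I_ε[S,T,U] ≥ (1/2)‖U‖²_ε − C(ε)‖U‖_ε for some constant C(ε) > 0 independent of (S,T,U), where ‖U‖²_ε := ∫_{-1}^1 U'²(1+ε−x²)dx. Consequently I_ε is coercive: for every P ∈ ℝ there exists Q_P such that ‖(S,T,U)‖ ≥ Q_P implies I_ε[S,T,U] ≥ P. -/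

import Mathlib

open Real Set MeasureTheory intervalIntegral

noncomputable def c1eps (ε : ℝ) (U : ℝ → ℝ) : ℝ :=
  Real.sqrt (∫ x in (-1:ℝ)..1, Real.exp (4 * U x) * (1 + ε - x^2))

noncomputable def c2 (S T : ℝ → ℝ) : ℝ := ∫ x in (-1:ℝ)..1, S x * T x

noncomputable def c3 (S : ℝ → ℝ) : ℝ := (1 / Real.sqrt 2) * ∫ x in (-1:ℝ)..1, S x

noncomputable def M1 (S : ℝ → ℝ) : ℝ := max 0 (4 - (c3 S)^4)

noncomputable def M2eps (ε : ℝ) (S T U : ℝ → ℝ) : ℝ :=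
  max 0 ((Real.sqrt (M1 S) - 2 * |c2 S T|) / c1eps ε U)

/-- The functional I_ε of the paper (with T', U' the derivatives of T, U). -/
noncomputable def Ieps (ε : ℝ) (S T T' U U' : ℝ → ℝ) : ℝ :=
  (1/2) * (∫ x in (-1:ℝ)..1,
      ((U' x)^2 * (1 + ε - x^2) - 2 * x * U' x
        + ((S x)^2 + (T' x)^2) * Real.exp (-2 * U x)))
    + (M2eps ε S T U)^2 / 2

/-- The weighted norm ‖U‖_ε, squared: ∫ U'²(1+ε−x²) dx. -/
noncomputable def normUsq (ε : ℝ) (U' : ℝ → ℝ) : ℝ :=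
  ∫ x in (-1:ℝ)..1, (U' x)^2 * (1 + ε - x^2)

/-- The norm on X = L²×W^{1,2}_0×W^{1,2}_0: ‖(S,T,U)‖² = ∫ [S² + T'² + U'²(1+ε−x²)] dx. -/
noncomputable def normXsq (ε : ℝ) (S T' U' : ℝ → ℝ) : ℝ :=
  ∫ x in (-1:ℝ)..1, ((S x)^2 + (T' x)^2 + (U' x)^2 * (1 + ε - x^2))

/-- Membership of (S,T,U) (with weak derivatives T', U') in X. -/
def memX (S T T' U U' : ℝ → ℝ) : Prop :=
  IntervalIntegrable (fun x => (S x)^2) volume (-1) 1 ∧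
  (∀ x ∈ Icc (-1:ℝ) 1, HasDerivAt T (T' x) x) ∧
  IntervalIntegrable (fun x => (T' x)^2) volume (-1) 1 ∧
  T (-1) = 0 ∧ T 1 = 0 ∧
  (∀ x ∈ Icc (-1:ℝ) 1, HasDerivAt U (U' x) x) ∧
  IntervalIntegrable (fun x => (U' x)^2) volume (-1) 1 ∧
  U (-1) = 0 ∧ U 1 = 0

private lemma le_zero_of_forall_mul {c L : ℝ} (hL : 0 ≤ L) (h : ∀ t : ℝ, 0 < t → c ≤ L * t) :
    c ≤ 0 := by
  by_contra hc
  push_neg at hc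
  rcases eq_or_lt_of_le hL with h0 | hL'
  · have := h 1 one_pos
    rw [← h0] at this
    linarith
  · have h1 := h (c / (2 * L)) (div_pos hc (by linarith))
    have h2 : L * (c / (2 * L)) = c / 2 := by field_simp
    linarith

private lemma t_trick {N K A : ℝ} (hN : 0 ≤ N) (hK : 0 ≤ K)
    (h : ∀ t : ℝ, 0 < t → A ≤ t * N + K / t) :
    A ≤ 2 * Real.sqrt K * Real.sqrt N := by
  rcases eq_or_lt_of_le hN with hN0 | hNpos
  · have h' : ∀ u : ℝ, 0 < u → A ≤ K * u := by
      intro u hu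
      have := h u⁻¹ (inv_pos.mpr hu)
      rw [← hN0] at this
      simpa [div_inv_eq_mul] using this
    have : (0:ℝ) ≤ 2 * Real.sqrt K * Real.sqrt N := by positivity
    linarith [le_zero_of_forall_mul hK h']
  · rcases eq_or_lt_of_le hK with hK0 | hKpos
    · have h' : ∀ t : ℝ, 0 < t → A ≤ N * t := by
        intro t ht
        have := h t ht
        rw [← hK0] at this
        simpa [mul_comm] using this
      nlinarith [Real.sqrt_nonneg K, Real.sqrt_nonneg N, le_zero_of_forall_mul hN h']
    · have ht : 0 < Real.sqrt K / Real.sqrt N :=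
        div_pos (Real.sqrt_pos.mpr hKpos) (Real.sqrt_pos.mpr hNpos)
      have h1 : Real.sqrt K / Real.sqrt N * N = Real.sqrt K * Real.sqrt N := by
        rw [div_mul_eq_mul_div, mul_div_assoc, Real.div_sqrt]
      have h2 : K / (Real.sqrt K / Real.sqrt N) = Real.sqrt K * Real.sqrt N := by
        rw [div_div_eq_mul_div, mul_comm, mul_div_assoc, Real.div_sqrt, mul_comm]
      have := h _ ht
      rw [h1, h2] at this
      linarith

set_option maxHeartbeats 1000000 in
private lemma master {ε : ℝ} (hε : 0 < ε) (S T T' U U' : ℝ → ℝ) (h : memX S T T' U U') :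
    normXsq ε S T' U' = (∫ x in Ioc (-1:ℝ) 1, (S x)^2) + (∫ x in Ioc (-1:ℝ) 1, (T' x)^2)
        + normUsq ε U' ∧
    0 ≤ normUsq ε U' ∧ 0 ≤ (∫ x in Ioc (-1:ℝ) 1, (S x)^2) ∧
    0 ≤ (∫ x in Ioc (-1:ℝ) 1, (T' x)^2) ∧
    Ieps ε S T T' U U' ≥ (1/2) * normUsq ε U'
      - (Real.sqrt (∫ x in Ioc (-1:ℝ) 1, x^2 / (1 + ε - x^2)) + 1) * Real.sqrt (normUsq ε U')
      + (1/2) * (Real.exp (-(normUsq ε U' / ε + 2))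
          * ((∫ x in Ioc (-1:ℝ) 1, (S x)^2) + (∫ x in Ioc (-1:ℝ) 1, (T' x)^2))) := by
  obtain ⟨hS2, hT, hT2, _, _, hU, hU2, hU1, _⟩ := h
  have hle : (-1:ℝ) ≤ 1 := by norm_num
  have hsub : Ioc (-1:ℝ) 1 ⊆ Icc (-1:ℝ) 1 := Ioc_subset_Icc_self
  have hw : ∀ x ∈ Icc (-1:ℝ) 1, ε ≤ 1 + ε - x^2 ∧ 1 + ε - x^2 ≤ 1 + ε := by
    rintro x ⟨h1, h2⟩
    constructor
    · nlinarith
    · nlinarith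
  have habs : ∀ y : ℝ, |y| ≤ (1 + y^2)/2 := by
    intro y
    nlinarith [sq_abs y, sq_nonneg (|y| - 1), abs_nonneg y]
  -- integrability conversions
  have hS2' : IntegrableOn (fun x => (S x)^2) (Ioc (-1:ℝ) 1) :=
    (intervalIntegrable_iff_integrableOn_Ioc_of_le hle).mp hS2
  have hT2' : IntegrableOn (fun x => (T' x)^2) (Ioc (-1:ℝ) 1) :=
    (intervalIntegrable_iff_integrableOn_Ioc_of_le hle).mp hT2
  have hU2' : IntegrableOn (fun x => (U' x)^2) (Ioc (-1:ℝ) 1) :=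
    (intervalIntegrable_iff_integrableOn_Ioc_of_le hle).mp hU2
  -- measurability
  have hU'meas : AEStronglyMeasurable U' (volume.restrict (Ioc (-1:ℝ) 1)) := by
    have heq : ∀ x ∈ Ioc (-1:ℝ) 1, deriv U x = U' x := fun x hx => (hU x (hsub hx)).deriv
    exact (measurable_deriv U).aestronglyMeasurable.congr
      ((ae_restrict_mem measurableSet_Ioc).mono heq)
  have hUcont : ContinuousOn U (Icc (-1:ℝ) 1) :=
    fun x hx => (hU x hx).continuousAt.continuousWithinAt
  have hUm : AEMeasurable U (volume.restrict (Ioc (-1:ℝ) 1)) :=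
    (hUcont.mono hsub).aemeasurable measurableSet_Ioc
  have hexpm : AEStronglyMeasurable (fun x => Real.exp (-2 * U x))
      (volume.restrict (Ioc (-1:ℝ) 1)) :=
    (Real.measurable_exp.comp_aemeasurable (hUm.const_mul (-2))).aestronglyMeasurable
  -- integrability of the pieces
  have hNint : IntegrableOn (fun x => (U' x)^2 * (1 + ε - x^2)) (Ioc (-1:ℝ) 1) := by
    apply Integrable.mono' (hU2'.const_mul (1 + ε))
      ((hU2'.aestronglyMeasurable).mul
        ((continuous_const.sub (continuous_pow 2)).aestronglyMeasurable.restrict))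
    filter_upwards [ae_restrict_mem measurableSet_Ioc] with x hx
    obtain ⟨hb1, hb2⟩ := hw x (hsub hx)
    simp only [Pi.mul_apply, Pi.sub_apply]
    rw [Real.norm_eq_abs, abs_of_nonneg (mul_nonneg (sq_nonneg _) (le_trans hε.le hb1))]
    nlinarith [sq_nonneg (U' x)]
  have hone : IntegrableOn (fun _ : ℝ => (1:ℝ)) (Ioc (-1:ℝ) 1) :=
    integrableOn_const measure_Ioc_lt_top.ne
  have hgint : IntegrableOn (fun x => (1 + (U' x)^2) / 2) (Ioc (-1:ℝ) 1) :=
    (hone.add hU2').div_const 2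
  have hidmeas : AEStronglyMeasurable (fun x : ℝ => x) (volume.restrict (Ioc (-1:ℝ) 1)) :=
    aestronglyMeasurable_id
  have hxU'int : IntegrableOn (fun x => x * U' x) (Ioc (-1:ℝ) 1) := by
    apply Integrable.mono' hgint (hidmeas.mul hU'meas)
    filter_upwards [ae_restrict_mem measurableSet_Ioc] with x hx
    have hx1 : |x| ≤ 1 := abs_le.mpr ⟨(hsub hx).1, (hsub hx).2⟩
    simp only [Pi.mul_apply]
    rw [Real.norm_eq_abs, abs_mul]
    nlinarith [habs (U' x), abs_nonneg (U' x), abs_nonneg x]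
  have hU'int : IntegrableOn U' (Ioc (-1:ℝ) 1) := by
    apply Integrable.mono' hgint hU'meas
    filter_upwards [] with x
    rw [Real.norm_eq_abs]
    exact habs (U' x)
  obtain ⟨xm, hxmem, hxm⟩ : ∃ z ∈ Icc (-1:ℝ) 1, ∀ y ∈ Icc (-1:ℝ) 1,
      Real.exp (-2 * U y) ≤ Real.exp (-2 * U z) := by
    obtain ⟨z, hz, hz2⟩ := isCompact_Icc.exists_isMaxOn (s := Icc (-1:ℝ) 1)
      ⟨0, by norm_num⟩
      (Real.continuous_exp.comp_continuousOn
        (continuousOn_const.mul hUcont) : ContinuousOn (fun y => Real.exp (-2 * U y)) _)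
    exact ⟨z, hz, fun y hy => hz2 hy⟩
  have hSTint : IntegrableOn (fun x => ((S x)^2 + (T' x)^2) * Real.exp (-2 * U x))
      (Ioc (-1:ℝ) 1) := by
    apply Integrable.mono' ((hS2'.add hT2').const_mul (Real.exp (-2 * U xm)))
      ((hS2'.aestronglyMeasurable.add hT2'.aestronglyMeasurable).mul hexpm)
    filter_upwards [ae_restrict_mem measurableSet_Ioc] with x hx
    have h1 : 0 ≤ (S x)^2 + (T' x)^2 := by positivity
    simp only [Pi.mul_apply, Pi.add_apply]
    rw [Real.norm_eq_abs, abs_of_nonneg (mul_nonneg h1 (Real.exp_pos _).le), mul_comm]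
    exact mul_le_mul_of_nonneg_right (hxm x (hsub hx)) h1
  -- the Cauchy–Schwarz weight
  have hKcont : ContinuousOn (fun x : ℝ => x^2 / (1 + ε - x^2)) (Icc (-1:ℝ) 1) := by
    apply ContinuousOn.div (continuous_pow 2).continuousOn
      (continuous_const.sub (continuous_pow 2)).continuousOn
    intro x hx
    exact ne_of_gt (lt_of_lt_of_le hε (hw x hx).1)
  have hKint : IntegrableOn (fun x : ℝ => x^2 / (1 + ε - x^2)) (Ioc (-1:ℝ) 1) :=
    (hKcont.integrableOn_Icc).mono_set hsub
  set N := ∫ x in Ioc (-1:ℝ) 1, (U' x)^2 * (1 + ε - x^2) with hN_def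
  set K := ∫ x in Ioc (-1:ℝ) 1, x^2 / (1 + ε - x^2) with hK_def
  set A := ∫ x in Ioc (-1:ℝ) 1, x * U' x with hA_def
  set E := ∫ x in Ioc (-1:ℝ) 1, ((S x)^2 + (T' x)^2) * Real.exp (-2 * U x) with hE_def
  set RS := ∫ x in Ioc (-1:ℝ) 1, (S x)^2 with hRS_def
  set RT := ∫ x in Ioc (-1:ℝ) 1, (T' x)^2 with hRT_def
  have hNeq : normUsq ε U' = N := by
    unfold normUsq
    rw [intervalIntegral.integral_of_le hle]
  have hN0 : 0 ≤ N := by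
    rw [hN_def]
    exact setIntegral_nonneg measurableSet_Ioc
      (fun x hx => mul_nonneg (sq_nonneg _) (le_trans hε.le (hw x (hsub hx)).1))
  have hK0 : 0 ≤ K := by
    rw [hK_def]
    exact setIntegral_nonneg measurableSet_Ioc
      (fun x hx => div_nonneg (sq_nonneg _) (le_trans hε.le (hw x (hsub hx)).1))
  have hRS0 : 0 ≤ RS := by
    rw [hRS_def]
    exact setIntegral_nonneg measurableSet_Ioc (fun x _ => sq_nonneg _)
  have hRT0 : 0 ≤ RT := by
    rw [hRT_def]
    exact setIntegral_nonneg measurableSet_Ioc (fun x _ => sq_nonneg _)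
  have hTN : IntegrableOn (fun x => (T' x)^2 + (U' x)^2 * (1 + ε - x^2)) (Ioc (-1:ℝ) 1) :=
    hT2'.add hNint
  have hXeq : normXsq ε S T' U' = RS + RT + N := by
    unfold normXsq
    rw [intervalIntegral.integral_of_le hle]
    have hcg0 : ∀ x : ℝ, (S x)^2 + (T' x)^2 + (U' x)^2 * (1 + ε - x^2)
        = (S x)^2 + ((T' x)^2 + (U' x)^2 * (1 + ε - x^2)) := fun x => by ring
    simp_rw [hcg0]
    rw [MeasureTheory.integral_add hS2' hTN, MeasureTheory.integral_add hT2' hNint]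
    ring
  have hsplit : (∫ x in (-1:ℝ)..1,
      ((U' x)^2 * (1 + ε - x^2) - 2 * x * U' x
        + ((S x)^2 + (T' x)^2) * Real.exp (-2 * U x))) = N - 2 * A + E := by
    rw [intervalIntegral.integral_of_le hle]
    have hcg : ∀ x : ℝ, (U' x)^2 * (1 + ε - x^2) - 2 * x * U' x
        + ((S x)^2 + (T' x)^2) * Real.exp (-2 * U x)
        = ((U' x)^2 * (1 + ε - x^2) - 2 * (x * U' x))
          + ((S x)^2 + (T' x)^2) * Real.exp (-2 * U x) := fun x => by ring
    simp_rw [hcg]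
    have h2x : IntegrableOn (fun x => 2 * (x * U' x)) (Ioc (-1:ℝ) 1) := hxU'int.const_mul 2
    have hsub2 : IntegrableOn
        (fun x => (U' x)^2 * (1 + ε - x^2) - 2 * (x * U' x)) (Ioc (-1:ℝ) 1) := hNint.sub h2x
    rw [MeasureTheory.integral_add hsub2 hSTint, MeasureTheory.integral_sub hNint h2x,
      MeasureTheory.integral_const_mul]
  -- Cauchy–Schwarz via the t-trick
  have hCS : 2 * A ≤ 2 * Real.sqrt K * Real.sqrt N := by
    apply t_trick hN0 hK0
    intro t ht
    have h2x : IntegrableOn (fun x => 2 * (x * U' x)) (Ioc (-1:ℝ) 1) := hxU'int.const_mul 2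
    have htN : IntegrableOn (fun x => t * ((U' x)^2 * (1 + ε - x^2))) (Ioc (-1:ℝ) 1) :=
      hNint.const_mul t
    have htK : IntegrableOn (fun x => (x^2 / (1 + ε - x^2)) / t) (Ioc (-1:ℝ) 1) :=
      hKint.div_const t
    have hpt : ∫ x in Ioc (-1:ℝ) 1, 2 * (x * U' x)
        ≤ ∫ x in Ioc (-1:ℝ) 1,
            (t * ((U' x)^2 * (1 + ε - x^2)) + (x^2 / (1 + ε - x^2)) / t) := by
      apply setIntegral_mono_on h2x (htN.add htK) measurableSet_Ioc
      intro x hx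
      have hwpos : 0 < 1 + ε - x^2 := lt_of_lt_of_le hε (hw x (hsub hx)).1
      have h1 : 0 < t * (1 + ε - x^2) := mul_pos ht hwpos
      have hexp : (t * ((U' x)^2 * (1 + ε - x^2)) + (x^2 / (1 + ε - x^2)) / t)
          * (t * (1 + ε - x^2))
          = t^2 * (1 + ε - x^2)^2 * (U' x)^2 + x^2 := by
        field_simp
      have key : 2 * (x * U' x) * (t * (1 + ε - x^2))
          ≤ (t * ((U' x)^2 * (1 + ε - x^2)) + (x^2 / (1 + ε - x^2)) / t)
            * (t * (1 + ε - x^2)) := by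
        rw [hexp]
        nlinarith [sq_nonneg (t * (1 + ε - x^2) * U' x - x)]
      exact le_of_mul_le_mul_right key h1
    rw [MeasureTheory.integral_const_mul, MeasureTheory.integral_add htN htK,
      MeasureTheory.integral_const_mul, MeasureTheory.integral_div] at hpt
    exact hpt
  -- pointwise bound on U via FTC
  have hU'ii : IntervalIntegrable U' volume (-1) 1 :=
    (intervalIntegrable_iff_integrableOn_Ioc_of_le hle).mpr hU'int
  have hint1 : ∫ t in Ioc (-1:ℝ) 1, (1:ℝ) = 2 := by
    simp [Real.volume_Ioc]
    norm_num
  have hNdiv : IntegrableOn (fun t => ((U' t)^2 * (1 + ε - t^2)) / ε) (Ioc (-1:ℝ) 1) :=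
    hNint.div_const ε
  have hgint2 : IntegrableOn (fun t => (1 + ((U' t)^2 * (1 + ε - t^2)) / ε) / 2)
      (Ioc (-1:ℝ) 1) := (hone.add hNdiv).div_const 2
  have hUbound : ∀ x ∈ Icc (-1:ℝ) 1, U x ≤ (N / ε + 2) / 2 := by
    intro x hx
    have hFTC : ∫ t in (-1:ℝ)..x, U' t = U x - U (-1) := by
      apply intervalIntegral.integral_eq_sub_of_hasDerivAt
      · intro y hy
        rw [uIcc_of_le hx.1] at hy
        exact hU y ⟨hy.1, le_trans hy.2 hx.2⟩
      · apply hU'ii.mono_set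
        rw [uIcc_of_le hx.1, uIcc_of_le hle]
        exact Icc_subset_Icc_right hx.2
    have h1 : U x = ∫ t in (-1:ℝ)..x, U' t := by rw [hFTC, hU1, sub_zero]
    have h2 : |∫ t in (-1:ℝ)..x, U' t| ≤ ∫ t in (-1:ℝ)..x, |U' t| :=
      intervalIntegral.abs_integral_le_integral_abs hx.1
    have h3 : (∫ t in (-1:ℝ)..x, |U' t|) ≤ ∫ t in Ioc (-1:ℝ) 1, |U' t| := by
      rw [intervalIntegral.integral_of_le hx.1]
      exact setIntegral_mono_set hU'int.abs
        (Filter.Eventually.of_forall (fun t => abs_nonneg _))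
        (HasSubset.Subset.eventuallyLE (Ioc_subset_Ioc_right hx.2))
    have h4 : (∫ t in Ioc (-1:ℝ) 1, |U' t|) ≤ (N / ε + 2) / 2 := by
      have h5 : (∫ t in Ioc (-1:ℝ) 1, |U' t|)
          ≤ ∫ t in Ioc (-1:ℝ) 1, (1 + ((U' t)^2 * (1 + ε - t^2)) / ε) / 2 := by
        apply setIntegral_mono_on hU'int.abs hgint2 measurableSet_Ioc
        intro t htx
        have hb := (hw t (hsub htx)).1
        have h6 : (U' t)^2 ≤ (U' t)^2 * (1 + ε - t^2) / ε := by
          rw [le_div_iff₀ hε]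
          nlinarith [sq_nonneg (U' t)]
        nlinarith [habs (U' t)]
      have h7 : (∫ t in Ioc (-1:ℝ) 1, (1 + ((U' t)^2 * (1 + ε - t^2)) / ε) / 2)
          = (N / ε + 2) / 2 := by
        rw [MeasureTheory.integral_div, MeasureTheory.integral_add hone hNdiv,
          MeasureTheory.integral_div, hint1, ← hN_def]
        ring
      linarith
    have h8 : U x ≤ |U x| := le_abs_self _
    rw [h1] at h8 ⊢
    linarith
  -- lower bound on E
  have hE_lb : Real.exp (-(N / ε + 2)) * (RS + RT) ≤ E := by
    have h9 : (∫ x in Ioc (-1:ℝ) 1, Real.exp (-(N / ε + 2)) * ((S x)^2 + (T' x)^2)) ≤ E := by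
      rw [hE_def]
      apply setIntegral_mono_on ((hS2'.add hT2').const_mul _) hSTint measurableSet_Ioc
      intro x hx
      have h1 : 0 ≤ (S x)^2 + (T' x)^2 := by positivity
      have h2 : Real.exp (-(N / ε + 2)) ≤ Real.exp (-2 * U x) := by
        apply Real.exp_le_exp.mpr
        have := hUbound x (hsub hx)
        linarith
      calc Real.exp (-(N / ε + 2)) * ((S x)^2 + (T' x)^2)
          ≤ Real.exp (-2 * U x) * ((S x)^2 + (T' x)^2) :=
            mul_le_mul_of_nonneg_right h2 h1
        _ = ((S x)^2 + (T' x)^2) * Real.exp (-2 * U x) := mul_comm _ _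
    rw [MeasureTheory.integral_const_mul, MeasureTheory.integral_add hS2' hT2',
      ← hRS_def, ← hRT_def] at h9
    exact h9
  refine ⟨by rw [hNeq]; exact hXeq, hNeq ▸ hN0, hRS0, hRT0, ?_⟩
  rw [hNeq]
  have hIeq : Ieps ε S T T' U U' = (1/2) * (N - 2 * A + E) + (M2eps ε S T U)^2 / 2 := by
    unfold Ieps
    rw [hsplit]
  have hM2 : 0 ≤ (M2eps ε S T U)^2 / 2 := by positivity
  have hfold : (Real.sqrt K + 1) * Real.sqrt N = Real.sqrt K * Real.sqrt N + Real.sqrt N := by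
    ring
  rw [hIeq, ge_iff_le, hfold]
  have hE_lb2 : Real.exp (-(N / ε + 2)) * (RS + RT) ≤ E := hE_lb
  have hsN : 0 ≤ Real.sqrt N := Real.sqrt_nonneg N
  linarith


set_option maxHeartbeats 1000000 in
/-- I_ε ≥ (1/2)‖U‖²_ε − C(ε)‖U‖_ε for a constant C(ε) > 0 independent of
(S,T,U); consequently I_ε is coercive on X. -/
theorem stmt_5 (ε : ℝ) (hε : 0 < ε) :
    (∃ C > (0:ℝ), ∀ S T T' U U' : ℝ → ℝ, memX S T T' U U' →
        Ieps ε S T T' U U' ≥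
          (1/2) * normUsq ε U' - C * Real.sqrt (normUsq ε U')) ∧
    (∀ P : ℝ, ∃ Q : ℝ, ∀ S T T' U U' : ℝ → ℝ, memX S T T' U U' →
        Real.sqrt (normXsq ε S T' U') ≥ Q → Ieps ε S T T' U U' ≥ P) := by
  constructor
  · refine ⟨Real.sqrt (∫ x in Ioc (-1:ℝ) 1, x^2 / (1 + ε - x^2)) + 1, by positivity,
      fun S T T' U U' h => ?_⟩
    obtain ⟨hXeq, hN0, hRS0, hRT0, hI⟩ := master hε S T T' U U' h
    have hexp0 : 0 ≤ Real.exp (-(normUsq ε U' / ε + 2))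
        * ((∫ x in Ioc (-1:ℝ) 1, (S x)^2) + (∫ x in Ioc (-1:ℝ) 1, (T' x)^2)) :=
      mul_nonneg (Real.exp_pos _).le (by linarith)
    linarith [hI]
  · intro P
    set K := ∫ x in Ioc (-1:ℝ) 1, x^2 / (1 + ε - x^2) with hK_def
    set C := Real.sqrt K + 1 with hC_def
    have hCpos : 0 < C := by positivity
    set P' := max P 0 with hP'_def
    have hP'0 : 0 ≤ P' := le_max_right _ _
    have hP'P : P ≤ P' := le_max_left _ _
    set D := Real.sqrt (C^2 + 2*P') with hD_def
    have hD0 : 0 ≤ D := Real.sqrt_nonneg _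
    have hD2 : D^2 = C^2 + 2*P' := Real.sq_sqrt (by positivity)
    set N0 := (C + D)^2 with hN0_def
    have hN00 : 0 ≤ N0 := sq_nonneg _
    set m := Real.exp (-(N0/ε + 2)) with hm_def
    have hm : 0 < m := Real.exp_pos _
    refine ⟨Real.sqrt (N0 + max 0 ((2/m) * (P + C^2/2))), fun S T T' U U' h hQ => ?_⟩
    obtain ⟨hXeq, hN0', hRS0, hRT0, hI⟩ := master hε S T T' U U' h
    rw [← hK_def, ← hC_def] at hI
    set N := normUsq ε U' with hN_def
    set RS := ∫ x in Ioc (-1:ℝ) 1, (S x)^2 with hRS_def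
    set RT := ∫ x in Ioc (-1:ℝ) 1, (T' x)^2 with hRT_def
    have hmax0 : 0 ≤ max 0 ((2/m) * (P + C^2/2)) := le_max_left _ _
    have hX0 : 0 ≤ normXsq ε S T' U' := by rw [hXeq]; linarith
    have hQ0 : 0 ≤ Real.sqrt (N0 + max 0 ((2/m) * (P + C^2/2))) := Real.sqrt_nonneg _
    have hQ2 : N0 + max 0 ((2/m) * (P + C^2/2)) ≤ normXsq ε S T' U' := by
      have h1 := pow_le_pow_left₀ hQ0 hQ 2
      rwa [Real.sq_sqrt hX0, Real.sq_sqrt (by positivity)] at h1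
    have hsqN : Real.sqrt N ^ 2 = N := Real.sq_sqrt hN0'
    have hsN0 : 0 ≤ Real.sqrt N := Real.sqrt_nonneg _
    by_cases hcase : N0 ≤ N
    · have h1 : C + D ≤ Real.sqrt N := by
        have h2 := Real.sqrt_le_sqrt hcase
        rwa [hN0_def, Real.sqrt_sq (by positivity)] at h2
      have hexp0 : 0 ≤ Real.exp (-(N/ε + 2)) * (RS + RT) :=
        mul_nonneg (Real.exp_pos _).le (by linarith)
      have hprod : 0 ≤ (Real.sqrt N - (C + D)) * (Real.sqrt N - C + D) :=
        mul_nonneg (by linarith) (by linarith)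
      nlinarith [hI, hexp0, hsqN, hD2, hprod]
    · push_neg at hcase
      have hmle : m ≤ Real.exp (-(N/ε + 2)) := by
        rw [hm_def]
        apply Real.exp_le_exp.mpr
        have h3 : N / ε ≤ N0 / ε := (div_le_div_iff_of_pos_right hε).mpr hcase.le
        linarith
      have hRST : max 0 ((2/m) * (P + C^2/2)) ≤ RS + RT := by
        rw [hXeq] at hQ2
        linarith
      have hexpge : m * (RS + RT) ≤ Real.exp (-(N/ε + 2)) * (RS + RT) :=
        mul_le_mul_of_nonneg_right hmle (by linarith)
      have hlow : -(C^2)/2 ≤ (1/2) * N - C * Real.sqrt N := by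
        nlinarith [sq_nonneg (Real.sqrt N - C), hsqN]
      by_cases hPc : P + C^2/2 ≤ 0
      · have h6 : 0 ≤ m * (RS + RT) := mul_nonneg hm.le (by linarith)
        linarith [hI, hexpge, hlow]
      · push_neg at hPc
        have h5 : (2/m) * (P + C^2/2) ≤ RS + RT := le_trans (le_max_right _ _) hRST
        have hmmax : m * ((2/m) * (P + C^2/2)) = 2 * (P + C^2/2) := by
          field_simp
        have h7 : 2 * (P + C^2/2) ≤ m * (RS + RT) := by
          calc 2 * (P + C^2/2) = m * ((2/m) * (P + C^2/2)) := hmmax.symm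
            _ ≤ m * (RS + RT) := mul_le_mul_of_nonneg_left h5 hm.le
        linarith [hI, hexpge, hlow]
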